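/- The associated graded algebra of O(SL₂) with respect to the filtration (F_n), namely the ℤ-graded algebra ⊕_{n≥0} F_n/F_{n−2}, is isomorphic as a ℤ-graded ℂ-algebra to ℂ[a,b,c,d]/(ad − bc) with its standard grading (a, b, c, d in degree 1), via the map sending the class of a in F₁/F_{−1} to a, and similarly for b, c, d. -/

import Mathlib

open MvPolynomial
set_option synthInstance.maxHeartbeats 1000000
set_option maxHeartbeats 2000000

/-- `O(SL₂) = ℂ[a,b,c,d]/(ad − bc − 1)`, with `a = X 0`, `b = X 1`, `c = X 2`, `d = X 3`. -/
noncomputable abbrev OSL2 : Type :=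
  MvPolynomial (Fin 4) ℂ ⧸
    (Ideal.span {(X 0 : MvPolynomial (Fin 4) ℂ) * X 3 - X 1 * X 2 - 1})

/-- The quotient map `ℂ[a,b,c,d] → O(SL₂)`. -/
noncomputable def mkSL : MvPolynomial (Fin 4) ℂ →ₐ[ℂ] OSL2 :=
  Ideal.Quotient.mkₐ ℂ _

/-- The Peter–Weyl filtration subspace `F_n ⊆ O(SL₂)`. -/
noncomputable def Fdeg (n : ℤ) : Submodule ℂ OSL2 :=
  Submodule.span ℂ
    {x : OSL2 | ∃ k : Fin 4 → ℕ,
      ((∑ i, k i : ℕ) : ℤ) ≤ n ∧ ((∑ i, k i : ℕ) : ℤ) ≡ n [ZMOD 2] ∧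
      x = mkSL (∏ i, X i ^ k i)}

/-- The `n`-th graded piece `F_n / F_{n-2}` of the associated graded algebra of
`O(SL₂)` for the Peter–Weyl filtration. -/
noncomputable abbrev GrPiece (n : ℕ) : Type :=
  (Fdeg (n : ℤ)) ⧸ (Submodule.comap (Fdeg (n : ℤ)).subtype (Fdeg ((n : ℤ) - 2)))

/-- `ℂ[a,b,c,d]/(ad − bc)`, the homogeneous coordinate ring of `ℙ¹ × ℙ¹`. -/
noncomputable abbrev SegreRing : Type :=
  MvPolynomial (Fin 4) ℂ ⧸
    (Ideal.span {(X 0 : MvPolynomial (Fin 4) ℂ) * X 3 - X 1 * X 2})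

/-- The quotient map `ℂ[a,b,c,d] → ℂ[a,b,c,d]/(ad − bc)`. -/
noncomputable def mkSegre : MvPolynomial (Fin 4) ℂ →ₐ[ℂ] SegreRing :=
  Ideal.Quotient.mkₐ ℂ _

/-- The `n`-th graded piece of `ℂ[a,b,c,d]/(ad − bc)` with its standard grading:
the image of the degree-`n` homogeneous polynomials. -/
noncomputable def SegrePiece (n : ℕ) : Submodule ℂ SegreRing :=
  (homogeneousSubmodule (Fin 4) ℂ n).map mkSegre.toLinearMap

/-! ### Auxiliary material -/

namespace AGaux

/-- `ad - bc`. -/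
noncomputable def g0 : MvPolynomial (Fin 4) ℂ := X 0 * X 3 - X 1 * X 2

lemma g0_hom : g0.IsHomogeneous 2 :=
  ((isHomogeneous_X ℂ 0).mul (isHomogeneous_X ℂ 3)).sub
    ((isHomogeneous_X ℂ 1).mul (isHomogeneous_X ℂ 2))

lemma g0_ne_zero : g0 ≠ 0 := by
  intro h
  have := congrArg (eval (fun i : Fin 4 => if i = 0 ∨ i = 3 then (1 : ℂ) else 0)) h
  simp [g0] at this

lemma prodpow_hom (k : Fin 4 → ℕ) :
    (∏ i, X i ^ k i : MvPolynomial (Fin 4) ℂ).IsHomogeneous (∑ i, k i) :=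
  IsHomogeneous.prod _ _ _ (fun i _ => isHomogeneous_X_pow i (k i))

/-- Polynomial-level span corresponding to `Fdeg`. -/
noncomputable def PSpan (N : ℤ) : Submodule ℂ (MvPolynomial (Fin 4) ℂ) :=
  Submodule.span ℂ
    {p : MvPolynomial (Fin 4) ℂ | ∃ k : Fin 4 → ℕ,
      ((∑ i, k i : ℕ) : ℤ) ≤ N ∧ ((∑ i, k i : ℕ) : ℤ) ≡ N [ZMOD 2] ∧
      p = ∏ i, X i ^ k i}

lemma Fdeg_eq (N : ℤ) : Fdeg N = (PSpan N).map mkSL.toLinearMap := by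
  rw [Fdeg, PSpan, Submodule.map_span]
  congr 1
  ext x
  constructor
  · rintro ⟨k, h1, h2, rfl⟩
    exact ⟨_, ⟨k, h1, h2, rfl⟩, rfl⟩
  · rintro ⟨p, ⟨k, h1, h2, rfl⟩, rfl⟩
    exact ⟨k, h1, h2, rfl⟩

lemma mem_PSpan_of_hom {m : ℕ} {p : MvPolynomial (Fin 4) ℂ} (hp : p.IsHomogeneous m) :
    p ∈ PSpan (m : ℤ) := by
  nth_rewrite 1 [p.as_sum]
  refine Submodule.sum_mem _ fun v hv => ?_
  have hdv : Finsupp.degree v = m := by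
    by_contra hne
    exact (mem_support_iff.mp hv) (hp.coeff_eq_zero hne)
  have hdeg : ∑ i, v i = m := by
    rw [← hdv, Finsupp.degree]
    exact (Finset.sum_subset (Finset.subset_univ _)
      (fun i _ hip => Finsupp.notMem_support_iff.mp hip)).symm
  have hmono : (monomial v) (coeff v p) = coeff v p • ∏ i, X i ^ v i := by
    rw [monomial_eq, smul_eq_C_mul]
    congr 1
    rw [Finsupp.prod_fintype]
    intro i; exact pow_zero _
  rw [hmono]
  exact Submodule.smul_mem _ _
    (Submodule.subset_span ⟨fun i => v i, by rw [hdeg], by rw [hdeg], rfl⟩)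

lemma mkSL_mem_Fdeg {m : ℕ} {p : MvPolynomial (Fin 4) ℂ} (hp : p.IsHomogeneous m) :
    mkSL p ∈ Fdeg (m : ℤ) := by
  rw [Fdeg_eq]
  exact ⟨p, mem_PSpan_of_hom hp, rfl⟩

lemma homComp_eq_zero_of_mem_PSpan {N : ℤ} {q : MvPolynomial (Fin 4) ℂ}
    (hq : q ∈ PSpan N) {j : ℕ} (hj : N < (j : ℤ)) :
    homogeneousComponent j q = 0 := by
  induction hq using Submodule.span_induction with
  | mem x hx =>
    obtain ⟨k, h1, _, rfl⟩ := hx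
    have hne : j ≠ ∑ i, k i := by omega
    rw [homogeneousComponent_of_mem ((mem_homogeneousSubmodule _ _).mpr (prodpow_hom k)),
      if_neg hne]
  | zero => simp
  | add x y _ _ hx hy => rw [map_add, hx, hy, add_zero]
  | smul c x _ hx => rw [map_smul, hx, smul_zero]

lemma homComp_mul_g0 (h : MvPolynomial (Fin 4) ℂ) (m : ℕ) :
    homogeneousComponent (m + 2) (h * g0) = homogeneousComponent m h * g0 := by
  induction h using MvPolynomial.induction_on' with
  | monomial u a =>
    have hu : (monomial u a).IsHomogeneous u.degree := isHomogeneous_monomial a rfl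
    have hmul : ((monomial u a) * g0).IsHomogeneous (u.degree + 2) := hu.mul g0_hom
    rw [homogeneousComponent_of_mem ((mem_homogeneousSubmodule _ _).mpr hmul),
      homogeneousComponent_of_mem ((mem_homogeneousSubmodule _ _).mpr hu)]
    by_cases hc : m = u.degree
    · rw [if_pos (show m + 2 = u.degree + 2 by omega), if_pos hc]
    · rw [if_neg (show m + 2 ≠ u.degree + 2 by omega), if_neg hc, zero_mul]
  | add p q hp hq => rw [add_mul, map_add, map_add, hp, hq, add_mul]

lemma homComp_mul_g0_small (h : MvPolynomial (Fin 4) ℂ) {m : ℕ} (hm : m < 2) :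
    homogeneousComponent m (h * g0) = 0 := by
  induction h using MvPolynomial.induction_on' with
  | monomial u a =>
    have hmul : ((monomial u a) * g0).IsHomogeneous (u.degree + 2) :=
      (isHomogeneous_monomial a rfl).mul g0_hom
    rw [homogeneousComponent_of_mem ((mem_homogeneousSubmodule _ _).mpr hmul),
      if_neg (show m ≠ u.degree + 2 by omega)]
  | add p q hp hq => rw [add_mul, map_add, hp, hq, add_zero]

lemma mem_ideal_of_mkSL {n : ℕ} {p : MvPolynomial (Fin 4) ℂ} (hp : p.IsHomogeneous n)
    (hm : mkSL p ∈ Fdeg ((n : ℤ) - 2)) : p ∈ Ideal.span {g0} := by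
  rw [Fdeg_eq] at hm
  obtain ⟨q, hq, hqe⟩ := hm
  have hpq : p - q ∈ Ideal.span {g0 - 1} := by
    have hmk : Ideal.Quotient.mk (Ideal.span {g0 - 1}) p
        = Ideal.Quotient.mk (Ideal.span {g0 - 1}) q := by
      have : mkSL q = mkSL p := hqe
      have h' := this.symm
      simp only [mkSL, Ideal.Quotient.mkₐ_eq_mk, g0] at h' ⊢
      exact h'
    exact Ideal.Quotient.eq.mp hmk
  obtain ⟨h, hh⟩ := Ideal.mem_span_singleton'.mp hpq
  -- hh : h * (g0 - 1) = p - q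
  have key : ∀ m : ℕ, n ≤ m →
      homogeneousComponent (m + 2) h = g0 * homogeneousComponent m h := by
    intro m hm2
    have e1 : homogeneousComponent (m + 2) p - homogeneousComponent (m + 2) q
        = homogeneousComponent m h * g0 - homogeneousComponent (m + 2) h := by
      rw [← map_sub, ← hh, mul_sub, mul_one, map_sub, homComp_mul_g0]
    rw [homogeneousComponent_of_mem ((mem_homogeneousSubmodule _ _).mpr hp),
      if_neg (show m + 2 ≠ n by omega),
      homComp_eq_zero_of_mem_PSpan hq (by push_cast; omega)] at e1
    linear_combination e1
  have chain : ∀ k : ℕ,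
      homogeneousComponent (n + 2 + 2 * k) h = g0 ^ (k + 1) * homogeneousComponent n h := by
    intro k
    induction k with
    | zero => simpa using key n le_rfl
    | succ k ih =>
      have hrw : n + 2 + 2 * (k + 1) = (n + 2 + 2 * k) + 2 := by ring
      rw [hrw, key _ (by omega), ih, pow_succ]
      ring
  have hn0 : homogeneousComponent n h = 0 := by
    have hz : homogeneousComponent (n + 2 + 2 * h.totalDegree) h = 0 :=
      homogeneousComponent_eq_zero _ h (by omega)
    rw [chain] at hz
    rcases mul_eq_zero.mp hz with h1 | h2
    · exact absurd h1 (pow_ne_zero _ g0_ne_zero)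
    · exact h2
  have e2 : p = homogeneousComponent n (h * g0) := by
    have e1 : homogeneousComponent n p - homogeneousComponent n q
        = homogeneousComponent n (h * g0) - homogeneousComponent n h := by
      rw [← map_sub, ← hh, mul_sub, mul_one, map_sub]
    rw [homogeneousComponent_of_mem ((mem_homogeneousSubmodule _ _).mpr hp), if_pos rfl,
      homComp_eq_zero_of_mem_PSpan hq (by omega), hn0, sub_zero, sub_zero] at e1
    exact e1
  by_cases hn2 : 2 ≤ n
  · have e3 : homogeneousComponent n (h * g0) = homogeneousComponent (n - 2) h * g0 := by
      conv_lhs => rw [show n = n - 2 + 2 by omega]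
      rw [homComp_mul_g0]
    exact Ideal.mem_span_singleton'.mpr ⟨homogeneousComponent (n - 2) h, (e2.trans e3).symm⟩
  · rw [homComp_mul_g0_small h (by omega)] at e2
    rw [e2]
    exact zero_mem _

lemma mkSL_mem_of_mem_ideal {n : ℕ} {p : MvPolynomial (Fin 4) ℂ} (hp : p.IsHomogeneous n)
    (hi : p ∈ Ideal.span {g0}) : mkSL p ∈ Fdeg ((n : ℤ) - 2) := by
  obtain ⟨h, hh⟩ := Ideal.mem_span_singleton'.mp hi
  -- hh : h * g0 = p
  have e2 : p = homogeneousComponent n (h * g0) := by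
    rw [hh, homogeneousComponent_of_mem ((mem_homogeneousSubmodule _ _).mpr hp), if_pos rfl]
  by_cases hn2 : 2 ≤ n
  · have e3 : p = homogeneousComponent (n - 2) h * g0 := by
      rw [e2]
      conv_lhs => rw [show n = n - 2 + 2 by omega]
      rw [homComp_mul_g0]
    have hmk : mkSL p = mkSL (homogeneousComponent (n - 2) h) := by
      have hmem : p - homogeneousComponent (n - 2) h ∈ Ideal.span {g0 - 1} := by
        refine Ideal.mem_span_singleton'.mpr ⟨homogeneousComponent (n - 2) h, ?_⟩
        rw [e3]; ring
      have := Ideal.Quotient.eq.mpr hmem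
      simp only [mkSL, Ideal.Quotient.mkₐ_eq_mk, g0] at this ⊢
      exact this
    have hcast : ((n - 2 : ℕ) : ℤ) = (n : ℤ) - 2 := by omega
    rw [hmk, ← hcast]
    exact mkSL_mem_Fdeg (homogeneousComponent_isHomogeneous _ _)
  · rw [homComp_mul_g0_small h (by omega)] at e2
    rw [e2, map_zero]
    exact zero_mem _

lemma Fdeg_le_sup (n : ℕ) :
    Fdeg (n : ℤ) ≤ Fdeg ((n : ℤ) - 2)
      ⊔ (homogeneousSubmodule (Fin 4) ℂ n).map mkSL.toLinearMap := by
  rw [Fdeg]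
  apply Submodule.span_le.mpr
  rintro x ⟨k, h1, h2, rfl⟩
  unfold Int.ModEq at h2
  by_cases hc : ∑ i, k i = n
  · apply Submodule.mem_sup_right
    exact ⟨∏ i, X i ^ k i, (mem_homogeneousSubmodule _ _).mpr (hc ▸ prodpow_hom k), rfl⟩
  · apply Submodule.mem_sup_left
    rw [Fdeg]
    apply Submodule.subset_span
    refine ⟨k, by omega, ?_, rfl⟩
    unfold Int.ModEq
    omega

end AGaux

open AGaux in
theorem associatedGraded_OSL2_iso :
    ∀ n : ℕ, ∃ e : SegrePiece n ≃ₗ[ℂ] GrPiece n,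
      ∀ (p : MvPolynomial (Fin 4) ℂ) (hp : p ∈ homogeneousSubmodule (Fin 4) ℂ n)
        (hmem : mkSL p ∈ Fdeg (n : ℤ)),
        e ⟨mkSegre p, Submodule.mem_map_of_mem hp⟩
          = Submodule.Quotient.mk ⟨mkSL p, hmem⟩ := by
  intro n
  set H := homogeneousSubmodule (Fin 4) ℂ n with hH
  let F : H →ₗ[ℂ] GrPiece n :=
    (Submodule.mkQ _).comp (LinearMap.codRestrict (Fdeg (n : ℤ))
      (mkSL.toLinearMap.comp H.subtype)
      (fun c => mkSL_mem_Fdeg ((mem_homogeneousSubmodule _ _).mp c.2)))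
  let G : H →ₗ[ℂ] SegrePiece n :=
    LinearMap.codRestrict (SegrePiece n) (mkSegre.toLinearMap.comp H.subtype)
      (fun c => Submodule.mem_map_of_mem c.2)
  have hGsurj : Function.Surjective G := by
    rintro ⟨x, q, hq, rfl⟩
    exact ⟨⟨q, hq⟩, rfl⟩
  have hker : LinearMap.ker G = LinearMap.ker F := by
    ext c
    obtain ⟨p, hp⟩ := c
    simp only [LinearMap.mem_ker]
    constructor
    · intro h0
      have hseg : mkSegre p = 0 := congrArg Subtype.val h0
      have hpmem : p ∈ Ideal.span {g0} := by
        apply Ideal.Quotient.eq_zero_iff_mem.mp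
        simp only [mkSegre, Ideal.Quotient.mkₐ_eq_mk, g0] at hseg ⊢
        exact hseg
      have hFd := mkSL_mem_of_mem_ideal ((mem_homogeneousSubmodule _ _).mp hp) hpmem
      show Submodule.Quotient.mk _ = 0
      rw [Submodule.Quotient.mk_eq_zero]
      exact hFd
    · intro h0
      have hFd : mkSL p ∈ Fdeg ((n : ℤ) - 2) := by
        have := (Submodule.Quotient.mk_eq_zero _).mp h0
        exact this
      have hpmem := mem_ideal_of_mkSL ((mem_homogeneousSubmodule _ _).mp hp) hFd
      apply Subtype.ext
      show mkSegre p = 0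
      simp only [mkSegre, Ideal.Quotient.mkₐ_eq_mk]
      exact Ideal.Quotient.eq_zero_iff_mem.mpr hpmem
  have hFsurj : Function.Surjective F := by
    intro y
    obtain ⟨⟨x, hx⟩, rfl⟩ := Submodule.Quotient.mk_surjective _ y
    obtain ⟨y1, hy1, z, hz, hxe⟩ := Submodule.mem_sup.mp (Fdeg_le_sup n hx)
    obtain ⟨pz, hpz, rfl⟩ := hz
    refine ⟨⟨pz, hpz⟩, ?_⟩
    show Submodule.Quotient.mk _ = Submodule.Quotient.mk _
    rw [Submodule.Quotient.eq, Submodule.mem_comap, map_sub]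
    show mkSL.toLinearMap pz - x ∈ Fdeg ((n : ℤ) - 2)
    have hval : mkSL.toLinearMap pz - x = -y1 := by rw [← hxe]; abel
    rw [hval]
    exact neg_mem hy1
  let eq1 := LinearMap.quotKerEquivOfSurjective G hGsurj
  have hinj : Function.Injective ((LinearMap.ker G).liftQ F hker.le) :=
    LinearMap.ker_eq_bot.mp (Submodule.ker_liftQ_eq_bot _ _ _ hker.ge)
  have hsurj2 : Function.Surjective ((LinearMap.ker G).liftQ F hker.le) := by
    rw [← LinearMap.range_eq_top, Submodule.range_liftQ, LinearMap.range_eq_top]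
    exact hFsurj
  let eq2 := LinearEquiv.ofBijective _ ⟨hinj, hsurj2⟩
  refine ⟨eq1.symm.trans eq2, ?_⟩
  intro p hp hmem
  have h1 : eq1.symm ⟨mkSegre p, Submodule.mem_map_of_mem hp⟩
      = Submodule.Quotient.mk ⟨p, hp⟩ := by
    rw [LinearEquiv.symm_apply_eq]
    rfl
  rw [LinearEquiv.trans_apply, h1]
  show ((LinearMap.ker G).liftQ F hker.le) (Submodule.Quotient.mk ⟨p, hp⟩) = _
  rw [Submodule.liftQ_apply]
  rfl
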